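/- For every positive integer $n$, the function $f_n : [0,\infty) \to \mathbb{R}$ defined by $f_n(x) = e^{-nx}\,\cosh_n(nx)$ is monotonically decreasing on $[0,\infty)$: for all $0 \le x \le y$, $f_n(y) \le f_n(x)$. -/

import Mathlib

/-- `cosh_n(x) = ∑_{k=0}^{n} x^(2k)/(2k)!`, the degree-`2n` Taylor polynomial of `cosh`. -/
noncomputable def coshPoly (n : ℕ) (x : ℝ) : ℝ :=
  ∑ k ∈ Finset.range (n + 1), x ^ (2 * k) / (Nat.factorial (2 * k) : ℝ)

noncomputable def Epoly (n : ℕ) (t : ℝ) : ℝ :=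
  ∑ j ∈ Finset.range (2 * n + 1), (-1) ^ j * t ^ j / (Nat.factorial j : ℝ)

noncomputable def Qpoly (n : ℕ) (t : ℝ) : ℝ :=
  ∑ k ∈ Finset.range (n + 1),
    ((2 * k : ℕ) : ℝ) * t ^ (2 * k - 1) / (Nat.factorial (2 * k) : ℝ)

lemma hasDerivAt_Epoly (n : ℕ) (t : ℝ) :
    HasDerivAt (Epoly n) (t ^ (2 * n) / (Nat.factorial (2 * n) : ℝ) - Epoly n t) t := by
  have h : HasDerivAt (Epoly n)
      (∑ j ∈ Finset.range (2 * n + 1),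
        (-1 : ℝ) ^ j * ((j : ℝ) * t ^ (j - 1)) / (Nat.factorial j : ℝ)) t := by
    apply HasDerivAt.fun_sum
    intro j _
    simpa using (((hasDerivAt_pow j t).const_mul ((-1:ℝ)^j)).div_const
      (Nat.factorial j : ℝ))
  convert h using 1
  rw [Finset.sum_range_succ' _ (2 * n)]
  have h2 : Epoly n t =
      (∑ i ∈ Finset.range (2 * n), (-1 : ℝ) ^ i * t ^ i / (Nat.factorial i : ℝ))
        + (-1 : ℝ) ^ (2 * n) * t ^ (2 * n) / (Nat.factorial (2 * n) : ℝ) := by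
    rw [Epoly, Finset.sum_range_succ]
  rw [h2]
  have hterm : ∀ i : ℕ,
      (-1 : ℝ) ^ (i + 1) * (((i : ℝ) + 1) * t ^ (i + 1 - 1)) / (Nat.factorial (i + 1) : ℝ)
        = -((-1 : ℝ) ^ i * t ^ i / (Nat.factorial i : ℝ)) := by
    intro i
    have hfac : (Nat.factorial (i + 1) : ℝ) = ((i : ℝ) + 1) * (Nat.factorial i : ℝ) := by
      rw [Nat.factorial_succ]; push_cast; ring
    have h1 : (Nat.factorial i : ℝ) ≠ 0 := Nat.cast_ne_zero.mpr (Nat.factorial_ne_zero i)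
    have h2 : ((i : ℝ) + 1) ≠ 0 := by positivity
    rw [hfac]
    field_simp
    rw [Nat.add_sub_cancel]
    ring
  simp only [Nat.cast_add, Nat.cast_one] at *
  rw [Finset.sum_congr rfl (fun i _ => hterm i), Finset.sum_neg_distrib]
  have hpar : (-1 : ℝ) ^ (2 * n) = 1 := by
    rw [pow_mul]; norm_num
  rw [hpar]
  push_cast
  ring

lemma Epoly_nonneg (n : ℕ) {t : ℝ} (ht : 0 ≤ t) : 0 ≤ Epoly n t := by
  have hmono : MonotoneOn (fun t => Real.exp t * Epoly n t) (Set.Ici 0) := by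
    have hderiv : ∀ x : ℝ, HasDerivAt (fun t => Real.exp t * Epoly n t)
        (Real.exp x * (x ^ (2 * n) / (Nat.factorial (2 * n) : ℝ))) x := by
      intro x
      have := (Real.hasDerivAt_exp x).fun_mul (hasDerivAt_Epoly n x)
      refine this.congr_deriv ?_
      ring
    apply monotoneOn_of_deriv_nonneg (convex_Ici 0)
    · apply Continuous.continuousOn
      exact Real.continuous_exp.mul (by
        apply continuous_finset_sum
        intro j _
        exact (continuous_const.mul (continuous_pow j)).div_const _)
    · intro x _
      exact ((hderiv x).differentiableAt.differentiableWithinAt)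
    · intro x hx
      rw [(hderiv x).deriv]
      have hx0 : 0 ≤ x := le_of_lt (by simpa using hx)
      positivity
  have h0 : (fun t => Real.exp t * Epoly n t) 0 = 1 := by
    simp [Epoly, Finset.sum_range_succ']
  have h1 : (1:ℝ) ≤ Real.exp t * Epoly n t := by
    have := hmono (Set.self_mem_Ici) (Set.mem_Ici.mpr ht) ht
    rw [h0] at this
    exact this
  have hexp : 0 < Real.exp t := Real.exp_pos t
  by_contra h
  push_neg at h
  have := mul_neg_of_pos_of_neg hexp h
  linarith

lemma coshPoly_sub_Qpoly (n : ℕ) (t : ℝ) : coshPoly n t - Qpoly n t = Epoly n t := by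
  induction n with
  | zero => simp [coshPoly, Qpoly, Epoly]
  | succ m ih =>
    have h1 : coshPoly (m + 1) t = coshPoly m t
        + t ^ (2 * (m + 1)) / (Nat.factorial (2 * (m + 1)) : ℝ) := by
      rw [coshPoly, coshPoly, Finset.sum_range_succ]
    have h2 : Qpoly (m + 1) t = Qpoly m t
        + ((2 * (m + 1) : ℕ) : ℝ) * t ^ (2 * (m + 1) - 1)
            / (Nat.factorial (2 * (m + 1)) : ℝ) := by
      rw [Qpoly, Qpoly, Finset.sum_range_succ]
    have h3 : Epoly (m + 1) t = Epoly m t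
        + (-1 : ℝ) ^ (2 * m + 1) * t ^ (2 * m + 1) / (Nat.factorial (2 * m + 1) : ℝ)
        + (-1 : ℝ) ^ (2 * m + 2) * t ^ (2 * m + 2) / (Nat.factorial (2 * m + 2) : ℝ) := by
      have : 2 * (m + 1) + 1 = (2 * m + 1) + 1 + 1 := by ring
      rw [Epoly, this, Finset.sum_range_succ, Finset.sum_range_succ]
      rfl
    rw [h1, h2, h3]
    have he1 : 2 * (m + 1) = 2 * m + 2 := by ring
    have he2 : 2 * (m + 1) - 1 = 2 * m + 1 := by omega
    rw [he1]
    have he3 : 2 * m + 2 - 1 = 2 * m + 1 := by omega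
    rw [he3]
    have hp1 : (-1 : ℝ) ^ (2 * m + 1) = -1 := by
      rw [pow_succ, pow_mul]; norm_num
    have hp2 : (-1 : ℝ) ^ (2 * m + 2) = 1 := by
      rw [pow_succ, pow_succ, pow_mul]; norm_num
    have hfac : (Nat.factorial (2 * m + 2) : ℝ)
        = ((2 * m + 2 : ℕ) : ℝ) * (Nat.factorial (2 * m + 1) : ℝ) := by
      rw [Nat.factorial_succ]; push_cast; ring
    have hf1 : (Nat.factorial (2 * m + 1) : ℝ) ≠ 0 :=
      Nat.cast_ne_zero.mpr (Nat.factorial_ne_zero _)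
    have hf2 : ((2 * m + 2 : ℕ) : ℝ) ≠ 0 := by positivity
    rw [hp1, hp2, hfac, ← ih]
    push_cast at *
    field_simp
    ring

lemma hasDerivAt_coshPoly (n : ℕ) (t : ℝ) :
    HasDerivAt (coshPoly n) (Qpoly n t) t := by
  apply HasDerivAt.fun_sum
  intro k _
  simpa using ((hasDerivAt_pow (2 * k) t).div_const (Nat.factorial (2 * k) : ℝ))

lemma antitone_g (n : ℕ) : AntitoneOn (fun t => Real.exp (-t) * coshPoly n t) (Set.Ici 0) := by
  have hd : ∀ x : ℝ, HasDerivAt (fun t => Real.exp (-t) * coshPoly n t)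
      (Real.exp (-x) * (-(Epoly n x))) x := by
    intro x
    have hexp : HasDerivAt (fun t : ℝ => Real.exp (-t)) (-Real.exp (-x)) x := by
      simpa using (HasDerivAt.exp (hasDerivAt_neg x))
    have := hexp.fun_mul (hasDerivAt_coshPoly n x)
    refine this.congr_deriv ?_
    rw [← coshPoly_sub_Qpoly n x]
    ring
  apply antitoneOn_of_deriv_nonpos (convex_Ici 0)
  · apply Continuous.continuousOn
    exact (Real.continuous_exp.comp continuous_neg).mul (by
      apply continuous_finset_sum
      intro k _
      exact (continuous_pow (2 * k)).div_const _)
  · intro x _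
    exact (hd x).differentiableAt.differentiableWithinAt
  · intro x hx
    rw [(hd x).deriv]
    have hx0 : 0 ≤ x := le_of_lt (by simpa using hx)
    have hE := Epoly_nonneg n hx0
    have := Real.exp_pos (-x)
    nlinarith

theorem stmt13 (n : ℕ) (hn : 0 < n) :
    ∀ x y : ℝ, 0 ≤ x → x ≤ y →
      Real.exp (-(n * y)) * coshPoly n (n * y) ≤
        Real.exp (-(n * x)) * coshPoly n (n * x) := by
  intro x y hx hxy
  have hnx : (0 : ℝ) ≤ n * x := by positivity
  have hny : (0 : ℝ) ≤ n * y := le_trans hnx (by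
    apply mul_le_mul_of_nonneg_left hxy (Nat.cast_nonneg n))
  have hle : (n : ℝ) * x ≤ n * y := mul_le_mul_of_nonneg_left hxy (Nat.cast_nonneg n)
  exact antitone_g n (Set.mem_Ici.mpr hnx) (Set.mem_Ici.mpr hny) hle
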